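/- Let G be a finite group, g, h ∈ G generating the same cyclic subgroup, and suppose there exists a normal subgroup N ⊴ G such that the coset gN is contained in the Aut(G)-orbit of g, the coset hN is contained in the Aut(G)-orbit of h, and for every word w and all elements x, y of G/N generating the same cyclic subgroup one has N_{w,G/N}(x) = N_{w,G/N}(y). Then N_{w,G}(g) = N_{w,G}(h) for every word w. -/

import Mathlib

open scoped Pointwise

/-- `N_{w,G}(g)`: the number of solutions in `G^r` to `w(g₁,…,g_r) = g`. -/
noncomputable def wordSolutions {r : ℕ} {G : Type*} [Group G]
    (w : FreeGroup (Fin r)) (g : G) : ℕ :=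
  Nat.card {x : Fin r → G // FreeGroup.lift x w = g}

private lemma lift_comp_hom {r : ℕ} {G H : Type*} [Group G] [Group H] (f : G →* H)
    (x : Fin r → G) (w : FreeGroup (Fin r)) :
    FreeGroup.lift (fun i => f (x i)) w = f (FreeGroup.lift x w) := by
  have := FreeGroup.lift_unique (f := fun i => f (x i))
    (f.comp (FreeGroup.lift x)) (fun i => by simp) (x := w)
  simpa using this.symm

private lemma lift_comp_equiv {r : ℕ} {G H : Type*} [Group G] [Group H] (α : G ≃* H)
    (x : Fin r → G) (w : FreeGroup (Fin r)) :
    FreeGroup.lift (fun i => α (x i)) w = α (FreeGroup.lift x w) := by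
  simpa using lift_comp_hom (α : G →* H) x w

private lemma lift_mk {r : ℕ} {G : Type*} [Group G] (N : Subgroup G) [N.Normal]
    (x : Fin r → G) (w : FreeGroup (Fin r)) :
    FreeGroup.lift (fun i => ((x i : G ⧸ N))) w = ((FreeGroup.lift x w : G) : G ⧸ N) := by
  simpa using lift_comp_hom (QuotientGroup.mk' N) x w

private lemma wordSolutions_aut {r : ℕ} {G : Type*} [Group G]
    (w : FreeGroup (Fin r)) (α : G ≃* G) (g : G) :
    wordSolutions w (α g) = wordSolutions w g := by
  apply Nat.card_congr
  refine ⟨fun x => ⟨fun i => α.symm (x.1 i), ?_⟩, fun x => ⟨fun i => α (x.1 i), ?_⟩, ?_, ?_⟩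
  · rw [lift_comp_equiv α.symm, x.2]; simp
  · rw [lift_comp_equiv α, x.2]
  · intro x; ext i; simp
  · intro x; ext i; simp

private lemma fiber_card {G : Type*} [Group G] [Fintype G] (N : Subgroup G) [N.Normal]
    (q : G ⧸ N) : Nat.card {a : G // (a : G ⧸ N) = q} = Nat.card N := by
  obtain ⟨b, rfl⟩ := QuotientGroup.mk_surjective q
  apply Nat.card_congr
  refine ⟨fun a => ⟨b⁻¹ * a.1, (QuotientGroup.eq (s := N)).mp a.2.symm⟩,
    fun n => ⟨b * n.1, ?_⟩, ?_, ?_⟩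
  · exact ((QuotientGroup.eq (s := N)).mpr (by simp [n.2])).symm
  · intro a; ext; simp
  · intro n; ext; simp

/-- The key counting identity. -/
private lemma key_count {G : Type*} [Group G] [Fintype G] (N : Subgroup G) [N.Normal]
    {r : ℕ} (w : FreeGroup (Fin r)) (g : G)
    (hg : g • (N : Set G) ⊆ {y | ∃ α : G ≃* G, α g = y}) :
    Nat.card N * wordSolutions w g
      = Nat.card N ^ r * wordSolutions w ((g : G ⧸ N)) := by
  classical
  have e1 : (Σ y : (g • (N : Set G) : Set G),
      {x : Fin r → G // FreeGroup.lift x w = y}) ≃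
      {x : Fin r → G // FreeGroup.lift x w ∈ g • (N : Set G)} :=
    Equiv.sigmaSubtypeFiberEquivSubtype (fun x : Fin r → G => FreeGroup.lift x w)
      (fun _ => Iff.rfl)
  have hcond : ∀ x : Fin r → G,
      FreeGroup.lift x w ∈ g • (N : Set G) ↔
      FreeGroup.lift (fun i => ((x i : G ⧸ N))) w = (g : G ⧸ N) := by
    intro x
    rw [mem_leftCoset_iff, lift_mk N]
    exact ⟨fun h => ((QuotientGroup.eq (s := N)).mpr h).symm,
      fun h => (QuotientGroup.eq (s := N)).mp h.symm⟩
  have e2 : {x : Fin r → G // FreeGroup.lift x w ∈ g • (N : Set G)} ≃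
      {x : Fin r → G // FreeGroup.lift (fun i => ((x i : G ⧸ N))) w = (g : G ⧸ N)} :=
    Equiv.subtypeEquivRight hcond
  have e3 : (Σ z : {z : Fin r → G ⧸ N // FreeGroup.lift z w = (g : G ⧸ N)},
      {x : Fin r → G // (fun i => ((x i : G ⧸ N))) = (z : Fin r → G ⧸ N)}) ≃
      {x : Fin r → G // FreeGroup.lift (fun i => ((x i : G ⧸ N))) w = (g : G ⧸ N)} :=
    Equiv.sigmaSubtypeFiberEquivSubtype (fun x : Fin r → G => fun i => ((x i : G ⧸ N)))
      (fun _ => Iff.rfl)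
  haveI : Fintype (G ⧸ N) := Fintype.ofFinite _
  have count1 : Nat.card (Σ y : (g • (N : Set G) : Set G),
      {x : Fin r → G // FreeGroup.lift x w = y}) = Nat.card N * wordSolutions w g := by
    haveI : ∀ y : (g • (N : Set G) : Set G),
        Fintype {x : Fin r → G // FreeGroup.lift x w = y} := fun y => Fintype.ofFinite _
    haveI : Fintype (g • (N : Set G) : Set G) := Fintype.ofFinite _
    rw [Nat.card_eq_fintype_card, Fintype.card_sigma]
    have hterm : ∀ y : (g • (N : Set G) : Set G),
        Fintype.card {x : Fin r → G // FreeGroup.lift x w = y} = wordSolutions w g := by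
      intro y
      obtain ⟨α, hα⟩ := hg y.2
      rw [← Nat.card_eq_fintype_card]
      calc Nat.card {x : Fin r → G // FreeGroup.lift x w = y}
          = wordSolutions w (α g) := by rw [hα]; rfl
        _ = wordSolutions w g := wordSolutions_aut w α g
    rw [Finset.sum_congr rfl (fun y _ => hterm y), Finset.sum_const, Finset.card_univ,
      smul_eq_mul]
    congr 1
    rw [← Nat.card_eq_fintype_card, Set.natCard_smul_set]
    simp
  have count2 : Nat.card (Σ z : {z : Fin r → G ⧸ N // FreeGroup.lift z w = (g : G ⧸ N)},
      {x : Fin r → G // (fun i => ((x i : G ⧸ N))) = (z : Fin r → G ⧸ N)}) =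
      Nat.card N ^ r * wordSolutions w ((g : G ⧸ N)) := by
    haveI : ∀ z : {z : Fin r → G ⧸ N // FreeGroup.lift z w = (g : G ⧸ N)},
        Fintype {x : Fin r → G // (fun i => ((x i : G ⧸ N))) = (z : Fin r → G ⧸ N)} :=
      fun z => Fintype.ofFinite _
    haveI : Fintype {z : Fin r → G ⧸ N // FreeGroup.lift z w = (g : G ⧸ N)} :=
      Fintype.ofFinite _
    rw [Nat.card_eq_fintype_card, Fintype.card_sigma]
    have hterm : ∀ z : {z : Fin r → G ⧸ N // FreeGroup.lift z w = (g : G ⧸ N)},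
        Fintype.card {x : Fin r → G // (fun i => ((x i : G ⧸ N))) = (z : Fin r → G ⧸ N)}
          = Nat.card N ^ r := by
      intro z
      rw [← Nat.card_eq_fintype_card]
      have e : {x : Fin r → G // (fun i => ((x i : G ⧸ N))) = (z : Fin r → G ⧸ N)} ≃
          ∀ i : Fin r, {a : G // (a : G ⧸ N) = z.1 i} :=
        (Equiv.subtypeEquivRight (fun x => funext_iff)).trans
          (Equiv.subtypePiEquivPi (p := fun i (a : G) => (a : G ⧸ N) = z.1 i))
      rw [Nat.card_congr e, Nat.card_pi,
        Finset.prod_congr rfl (fun i _ => fiber_card N (z.1 i)), Finset.prod_const,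
        Finset.card_univ, Fintype.card_fin]
    rw [Finset.sum_congr rfl (fun z _ => hterm z), Finset.sum_const, Finset.card_univ,
      smul_eq_mul, ← Nat.card_eq_fintype_card]
    exact Nat.mul_comm _ _
  rw [← count1, ← count2, Nat.card_congr (e1.trans e2), Nat.card_congr e3]

/-- If `g, h` generate the same cyclic subgroup, and there is a normal subgroup `N`
with `gN ⊆ O(g)`, `hN ⊆ O(h)`, and `N_{w,G/N}` constant on generators of cyclic
subgroups for every word, then `N_{w,G}(g) = N_{w,G}(h)` for every word `w`. -/
theorem wordSolutions_eq_of_quotient {G : Type*} [Group G] [Fintype G] (g h : G)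
    (hgh : Subgroup.zpowers g = Subgroup.zpowers h)
    (N : Subgroup G) [N.Normal]
    (hgN : g • (N : Set G) ⊆ {y | ∃ α : G ≃* G, α g = y})
    (hhN : h • (N : Set G) ⊆ {y | ∃ α : G ≃* G, α h = y})
    (hQ : ∀ (r : ℕ) (w : FreeGroup (Fin r)) (x y : G ⧸ N),
      Subgroup.zpowers x = Subgroup.zpowers y → wordSolutions w x = wordSolutions w y) :
    ∀ (r : ℕ) (w : FreeGroup (Fin r)), wordSolutions w g = wordSolutions w h := by
  intro r w
  have hz : Subgroup.zpowers ((g : G ⧸ N)) = Subgroup.zpowers ((h : G ⧸ N)) := by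
    rw [show ((g : G ⧸ N)) = (QuotientGroup.mk' N) g from rfl,
      show ((h : G ⧸ N)) = (QuotientGroup.mk' N) h from rfl,
      ← MonoidHom.map_zpowers, ← MonoidHom.map_zpowers, hgh]
  have hq := hQ r w _ _ hz
  have k1 := key_count N w g hgN
  have k2 := key_count N w h hhN
  have hNpos : 0 < Nat.card N := Nat.card_pos
  apply Nat.eq_of_mul_eq_mul_left hNpos
  rw [k1, k2, hq]
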